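/- For ξ₁, η₁, ξ₂, η₂ ∈ L²(ℝ^×, dt/|t|) and (b,a) ∈ ℝ ⋊ ℝ^×, the product of matrix coefficients satisfies ⟨π(b,a)ξ₁, η₁⟩ · ⟨π(b,a)ξ₂, η₂⟩ = ∫_{ℝ^×} ⟨π(b,a) (λ(1+h)ξ₁ · λ(1+h⁻¹)ξ₂), λ(1+h)η₁ · λ(1+h⁻¹)η₂⟩ dh/|h|, where the integral converges absolutely. -/

import Mathlib

open MeasureTheory

/-- The measure `dt/|t|` on `ℝ`, Haar measure of `ℝˣ`. -/
noncomputable def mulHaar : Measure ℝ :=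
  volume.withDensity fun t => ENNReal.ofReal (1 / |t|)

/-- The representation `(π(b,a)ξ)(t) = e^{2πibt} ξ(ta)`. -/
noncomputable def piOp (b a : ℝ) (f : ℝ → ℂ) : ℝ → ℂ :=
  fun t => Complex.exp (2 * Real.pi * Complex.I * b * t) * f (t * a)

/-- The inner product `⟨f, g⟩ = ∫ f(t) conj(g(t)) dt/|t|` of `L²(ℝˣ, dt/|t|)`. -/
noncomputable def ip (f g : ℝ → ℂ) : ℂ :=
  ∫ t, f t * (starRingEnd ℂ) (g t) ∂mulHaar

/-- `λ(1+h)ξ₁ · λ(1+h⁻¹)ξ₂`, i.e. `t ↦ ξ₁(t/(1+h)) · ξ₂(t/(1+h⁻¹))`. -/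
noncomputable def Fprod (ξ₁ ξ₂ : ℝ → ℂ) (h : ℝ) : ℝ → ℂ :=
  fun t => ξ₁ (t / (1 + h)) * ξ₂ (t / (1 + h⁻¹))

open Measure Set
open scoped ENNReal

lemma meas_rho : Measurable fun t : ℝ => ENNReal.ofReal (1 / |t|) := by
  apply ENNReal.measurable_ofReal.comp
  exact measurable_const.div measurable_abs

instance : SigmaFinite mulHaar := by
  rw [mulHaar]; infer_instance

lemma mulHaar_ac : mulHaar ≪ (volume : Measure ℝ) := by
  rw [mulHaar]; exact withDensity_absolutelyContinuous _ _

lemma mulHaar_ae_ne (x : ℝ) : ∀ᵐ t ∂mulHaar, t ≠ x := by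
  refine mulHaar_ac.ae_le ?_
  rw [mem_ae_iff]
  refine measure_mono_null (fun t ht => (?_ : t ∈ ({x} : Set ℝ))) (Real.volume_singleton (a := x))
  simpa using ht

lemma mulHaar_lintegral_comp_mul_left {c : ℝ} (hc : c ≠ 0) {g : ℝ → ℝ≥0∞}
    (hg : Measurable g) : ∫⁻ t, g (c * t) ∂mulHaar = ∫⁻ t, g t ∂mulHaar := by
  have e1 : ∫⁻ t, g (c * t) ∂mulHaar
      = ∫⁻ t, ENNReal.ofReal (1 / |t|) * g (c * t) ∂volume := by
    rw [mulHaar]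
    exact lintegral_withDensity_eq_lintegral_mul (volume : Measure ℝ) meas_rho
      (hg.comp (measurable_const_mul c))
  have e2 : ∫⁻ t, g t ∂mulHaar = ∫⁻ t, ENNReal.ofReal (1 / |t|) * g t ∂volume := by
    rw [mulHaar]
    exact lintegral_withDensity_eq_lintegral_mul (volume : Measure ℝ) meas_rho hg
  have hmap : ∫⁻ t, ENNReal.ofReal (1 / |c * t|) * g (c * t) ∂volume
      = ENNReal.ofReal |c⁻¹| * ∫⁻ s, ENNReal.ofReal (1 / |s|) * g s ∂volume := by
    have := lintegral_map (μ := volume) (g := fun x : ℝ => c * x)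
      (f := fun s : ℝ => ENNReal.ofReal (1 / |s|) * g s) (meas_rho.mul hg)
      (measurable_const_mul c)
    rw [Real.map_volume_mul_left hc, lintegral_smul_measure] at this
    exact this.symm
  rw [e1, e2]
  calc ∫⁻ t, ENNReal.ofReal (1 / |t|) * g (c * t) ∂volume
      = ∫⁻ t, ENNReal.ofReal |c| * (ENNReal.ofReal (1 / |c * t|) * g (c * t)) ∂volume := by
        refine lintegral_congr fun t => ?_
        rw [← mul_assoc, ← ENNReal.ofReal_mul (abs_nonneg c)]
        congr 2
        rcases eq_or_ne t 0 with rfl | ht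
        · simp
        · rw [abs_mul]; field_simp
    _ = ENNReal.ofReal |c| * ∫⁻ t, ENNReal.ofReal (1 / |c * t|) * g (c * t) ∂volume :=
        lintegral_const_mul _ ((meas_rho.comp (measurable_const_mul c)).mul
          (hg.comp (measurable_const_mul c)))
    _ = ENNReal.ofReal |c| * (ENNReal.ofReal |c⁻¹|
          * ∫⁻ s, ENNReal.ofReal (1 / |s|) * g s ∂volume) := by rw [hmap]
    _ = ∫⁻ s, ENNReal.ofReal (1 / |s|) * g s ∂volume := by
        rw [← mul_assoc, ← ENNReal.ofReal_mul (abs_nonneg _), ← abs_mul,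
          mul_inv_cancel₀ hc]
        simp

lemma mulHaar_mp {c : ℝ} (hc : c ≠ 0) :
    MeasurePreserving (fun t : ℝ => c * t) mulHaar mulHaar := by
  refine ⟨measurable_const_mul c, ?_⟩
  ext s hs
  rw [Measure.map_apply (measurable_const_mul c) hs]
  have key := mulHaar_lintegral_comp_mul_left hc (g := s.indicator 1)
    (measurable_one.indicator hs)
  have : ∀ t : ℝ, s.indicator (1 : ℝ → ℝ≥0∞) (c * t)
      = ((fun x : ℝ => c * x) ⁻¹' s).indicator (1 : ℝ → ℝ≥0∞) t := by
    intro t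
    by_cases ht : c * t ∈ s <;> simp [Set.indicator_apply, ht]
  simp_rw [this] at key
  rwa [lintegral_indicator_one (hs.preimage (measurable_const_mul c)),
    lintegral_indicator_one hs] at key

lemma mulHaar_qmp {c : ℝ} (hc : c ≠ 0) :
    Measure.QuasiMeasurePreserving (fun t : ℝ => c * t) mulHaar mulHaar :=
  (mulHaar_mp hc).quasiMeasurePreserving

lemma mulHaar_integral_comp_mul_left {c : ℝ} (hc : c ≠ 0) {g : ℝ → ℂ}
    (hg : AEStronglyMeasurable g mulHaar) :
    ∫ t, g (c * t) ∂mulHaar = ∫ t, g t ∂mulHaar := by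
  have hmap := (mulHaar_mp hc).map_eq
  have := integral_map (μ := mulHaar) (φ := fun t : ℝ => c * t)
    (measurable_const_mul c).aemeasurable (f := g) (by rw [hmap]; exact hg)
  rw [hmap] at this
  exact this.symm

lemma mulHaar_lintegral_comp_mul_left' {c : ℝ} (hc : c ≠ 0) {g : ℝ → ℝ≥0∞}
    (hg : AEMeasurable g mulHaar) :
    ∫⁻ t, g (c * t) ∂mulHaar = ∫⁻ t, g t ∂mulHaar := by
  have hmap := (mulHaar_mp hc).map_eq
  have := lintegral_map' (μ := mulHaar) (g := fun t : ℝ => c * t)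
    (f := g) (by rw [hmap]; exact hg) (measurable_const_mul c).aemeasurable
  rw [hmap] at this
  exact this.symm

lemma aesm_comp_mul_left {c : ℝ} (hc : c ≠ 0) {g : ℝ → ℂ}
    (hg : AEStronglyMeasurable g mulHaar) :
    AEStronglyMeasurable (fun t => g (c * t)) mulHaar :=
  hg.comp_quasiMeasurePreserving (mulHaar_qmp hc)

lemma memLp_conj {g : ℝ → ℂ} (hg : MemLp g 2 mulHaar) :
    MemLp (fun t => (starRingEnd ℂ) (g t)) 2 mulHaar :=
  MemLp.of_le hg (Complex.continuous_conj.comp_aestronglyMeasurable hg.1)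
    (Filter.Eventually.of_forall fun t => by simp)

lemma norm_efactor (b t : ℝ) : ‖Complex.exp (2 * Real.pi * Complex.I * b * t)‖ = 1 := by
  have : (2 * Real.pi * Complex.I * b * t)
      = Complex.I * ((2 * Real.pi * b * t : ℝ) : ℂ) := by push_cast; ring
  rw [this]
  simp [Complex.norm_exp, Complex.mul_re]

lemma aesm_efactor (b : ℝ) :
    AEStronglyMeasurable (fun t : ℝ => Complex.exp (2 * Real.pi * Complex.I * b * t)) mulHaar :=
  (Complex.continuous_exp.comp (by continuity)).aestronglyMeasurable

lemma memLp_comp_mul_right {a : ℝ} (ha : a ≠ 0) {g : ℝ → ℂ} (hg : MemLp g 2 mulHaar) :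
    MemLp (fun t => g (t * a)) 2 mulHaar := by
  have := hg.comp_measurePreserving (mulHaar_mp ha)
  have heq : (g ∘ fun t : ℝ => a * t) = fun t => g (t * a) := by
    funext t; simp [Function.comp, mul_comm]
  rwa [heq] at this

lemma integrable_coeff {ξ η : ℝ → ℂ} (hξ : MemLp ξ 2 mulHaar) (hη : MemLp η 2 mulHaar)
    (b a : ℝ) (ha : a ≠ 0) :
    Integrable (fun t : ℝ => Complex.exp (2 * Real.pi * Complex.I * b * t)
      * (ξ (t * a) * (starRingEnd ℂ) (η t))) mulHaar := by
  have hξa : MemLp (fun t => ξ (t * a)) 2 mulHaar := memLp_comp_mul_right ha hξ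
  have hconj : MemLp (fun t => (starRingEnd ℂ) (η t)) 2 mulHaar := memLp_conj hη
  have hmul : Integrable (fun t => ξ (t * a) * (starRingEnd ℂ) (η t)) mulHaar := by
    rw [← memLp_one_iff_integrable]
    have := hconj.smul (p := 2) (q := 2) (r := 1) hξa
    simpa [smul_eq_mul, Pi.mul_def] using this
  refine hmul.bdd_mul (c := 1) (aesm_efactor b) ?_
  exact Filter.Eventually.of_forall fun t => le_of_eq (norm_efactor b t)

lemma aesm_scale_right {c : ℝ} (hc : c ≠ 0) {g : ℝ → ℂ}
    (hg : AEStronglyMeasurable g mulHaar) :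
    AEStronglyMeasurable (fun t => g (t * c)) mulHaar := by
  have := aesm_comp_mul_left hc hg
  have heq : (fun t : ℝ => g (c * t)) = fun t => g (t * c) := by
    funext t; rw [mul_comm]
  rwa [heq] at this

lemma aesm_div {c : ℝ} (hc : c ≠ 0) {g : ℝ → ℂ}
    (hg : AEStronglyMeasurable g mulHaar) :
    AEStronglyMeasurable (fun t => g (t / c)) mulHaar := by
  have := aesm_scale_right (inv_ne_zero hc) hg
  have heq : (fun t : ℝ => g (t * c⁻¹)) = fun t => g (t / c) := by
    funext t; rw [div_eq_mul_inv]
  rwa [heq] at this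

lemma aesm_mul_div {a c : ℝ} (ha : a ≠ 0) (hc : c ≠ 0) {g : ℝ → ℂ}
    (hg : AEStronglyMeasurable g mulHaar) :
    AEStronglyMeasurable (fun t => g (t * a / c)) mulHaar := by
  have := aesm_scale_right (div_ne_zero ha hc) hg
  have heq : (fun t : ℝ => g (t * (a / c))) = fun t => g (t * a / c) := by
    funext t; rw [mul_div_assoc]
  rwa [heq] at this


/-- Fusion formula for matrix coefficients of `π`:
`⟨π(b,a)ξ₁, η₁⟩ ⟨π(b,a)ξ₂, η₂⟩
 = ∫ ⟨π(b,a)(λ(1+h)ξ₁ · λ(1+h⁻¹)ξ₂), λ(1+h)η₁ · λ(1+h⁻¹)η₂⟩ dh/|h|`,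
with the integral converging absolutely. -/
theorem fusion_of_coefficients (ξ₁ η₁ ξ₂ η₂ : ℝ → ℂ)
    (hξ₁ : MemLp ξ₁ 2 mulHaar) (hη₁ : MemLp η₁ 2 mulHaar)
    (hξ₂ : MemLp ξ₂ 2 mulHaar) (hη₂ : MemLp η₂ 2 mulHaar)
    (b a : ℝ) (ha : a ≠ 0) :
    Integrable (fun h => ip (piOp b a (Fprod ξ₁ ξ₂ h)) (Fprod η₁ η₂ h)) mulHaar ∧
    ip (piOp b a ξ₁) η₁ * ip (piOp b a ξ₂) η₂
      = ∫ h, ip (piOp b a (Fprod ξ₁ ξ₂ h)) (Fprod η₁ η₂ h) ∂mulHaar := by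
  set e : ℝ → ℂ := fun t => Complex.exp (2 * Real.pi * Complex.I * b * t) with he
  have he_add : ∀ x y : ℝ, e (x + y) = e x * e y := by
    intro x y
    simp only [he]
    rw [← Complex.exp_add]
    congr 1
    push_cast
    ring
  set f₁ : ℝ → ℂ := fun t => e t * (ξ₁ (t * a) * (starRingEnd ℂ) (η₁ t)) with hf₁d
  set f₂ : ℝ → ℂ := fun t => e t * (ξ₂ (t * a) * (starRingEnd ℂ) (η₂ t)) with hf₂d
  have hf₁ : Integrable f₁ mulHaar := integrable_coeff hξ₁ hη₁ b a ha
  have hf₂ : Integrable f₂ mulHaar := integrable_coeff hξ₂ hη₂ b a ha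
  have hip₁ : ip (piOp b a ξ₁) η₁ = ∫ t, f₁ t ∂mulHaar := by
    unfold ip piOp
    refine integral_congr_ae (Filter.Eventually.of_forall fun t => ?_)
    simp only [hf₁d, he]
    ring
  have hip₂ : ip (piOp b a ξ₂) η₂ = ∫ t, f₂ t ∂mulHaar := by
    unfold ip piOp
    refine integral_congr_ae (Filter.Eventually.of_forall fun t => ?_)
    simp only [hf₂d, he]
    ring
  set K : ℝ × ℝ → ℂ := fun p => f₁ p.1 * f₂ (p.1 * p.2) with hKd
  have hΦ : MeasurePreserving (fun p : ℝ × ℝ => (p.1, p.1 * p.2))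
      (mulHaar.prod mulHaar) (mulHaar.prod mulHaar) := by
    refine (MeasurePreserving.id mulHaar).skew_product (g := fun u h => u * h)
      (measurable_fst.mul measurable_snd) ?_
    filter_upwards [mulHaar_ae_ne 0] with u hu
    exact (mulHaar_mp hu).map_eq
  have hFmul : Integrable (fun q : ℝ × ℝ => f₁ q.1 * f₂ q.2) (mulHaar.prod mulHaar) :=
    hf₁.mul_prod hf₂
  have hK : Integrable K (mulHaar.prod mulHaar) :=
    (hΦ.integrable_comp hFmul.1).mpr hFmul
  have hchange : ∫ q : ℝ × ℝ, f₁ q.1 * f₂ q.2 ∂(mulHaar.prod mulHaar)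
      = ∫ p, K p ∂(mulHaar.prod mulHaar) := by
    have hmap := integral_map (μ := mulHaar.prod mulHaar)
      (φ := fun p : ℝ × ℝ => (p.1, p.1 * p.2)) hΦ.measurable.aemeasurable
      (f := fun q : ℝ × ℝ => f₁ q.1 * f₂ q.2) (by rw [hΦ.map_eq]; exact hFmul.1)
    rw [hΦ.map_eq] at hmap
    exact hmap
  have hswap : ∫ p, K p ∂(mulHaar.prod mulHaar)
      = ∫ h, ∫ u, K (u, h) ∂mulHaar ∂mulHaar := by
    rw [integral_prod _ hK]
    exact integral_integral_swap (f := fun u h => K (u, h)) (by exact hK)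
  have hint' : Integrable (fun h => ∫ u, K (u, h) ∂mulHaar) mulHaar := by
    exact hK.swap.integral_prod_left
  have haeh : (fun h => ip (piOp b a (Fprod ξ₁ ξ₂ h)) (Fprod η₁ η₂ h))
      =ᵐ[mulHaar] fun h => ∫ u, K (u, h) ∂mulHaar := by
    filter_upwards [mulHaar_ae_ne 0, mulHaar_ae_ne (-1)] with h h0 h1
    have h1' : (1 : ℝ) + h ≠ 0 := fun hcon => h1 (by linarith)
    have hinv : (1 : ℝ) + h⁻¹ = (1 + h) / h := by field_simp; ring
    have hinv' : (1 : ℝ) + h⁻¹ ≠ 0 := by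
      rw [hinv]; exact div_ne_zero h1' h0
    have hg : AEStronglyMeasurable
        (fun t => piOp b a (Fprod ξ₁ ξ₂ h) t * (starRingEnd ℂ) (Fprod η₁ η₂ h t)) mulHaar := by
      unfold piOp Fprod
      refine AEStronglyMeasurable.mul ?_ ?_
      · refine (aesm_efactor b).mul (AEStronglyMeasurable.mul ?_ ?_)
        · exact aesm_mul_div ha h1' hξ₁.1
        · exact aesm_mul_div ha hinv' hξ₂.1
      · refine Complex.continuous_conj.comp_aestronglyMeasurable
          (AEStronglyMeasurable.mul ?_ ?_)
        · exact aesm_div h1' hη₁.1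
        · exact aesm_div hinv' hη₂.1
    have hcv := mulHaar_integral_comp_mul_left (c := 1 + h) h1' hg
    show ip (piOp b a (Fprod ξ₁ ξ₂ h)) (Fprod η₁ η₂ h) = ∫ u, K (u, h) ∂mulHaar
    unfold ip
    rw [← hcv]
    refine integral_congr_ae (Filter.Eventually.of_forall fun u => ?_)
    unfold piOp Fprod
    have a1 : (1 + h) * u * a / (1 + h) = u * a := by
      rw [mul_assoc, mul_div_cancel_left₀ _ h1']
    have a2 : (1 + h) * u * a / (1 + h⁻¹) = u * h * a := by
      rw [hinv]
      field_simp
    have a3 : (1 + h) * u / (1 + h) = u := mul_div_cancel_left₀ _ h1'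
    have a4 : (1 + h) * u / (1 + h⁻¹) = u * h := by
      rw [hinv]
      field_simp
    have a5 : e ((1 + h) * u) = e u * e (u * h) := by
      rw [show (1 + h) * u = u + u * h by ring, he_add]
    show e ((1 + h) * u) * (ξ₁ ((1 + h) * u * a / (1 + h)) * ξ₂ ((1 + h) * u * a / (1 + h⁻¹)))
        * (starRingEnd ℂ) (η₁ ((1 + h) * u / (1 + h)) * η₂ ((1 + h) * u / (1 + h⁻¹)))
        = K (u, h)
    rw [a1, a2, a3, a4, a5, map_mul]
    simp only [hKd, hf₁d, hf₂d]
    ring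
  constructor
  · exact hint'.congr haeh.symm
  · calc ip (piOp b a ξ₁) η₁ * ip (piOp b a ξ₂) η₂
        = (∫ t, f₁ t ∂mulHaar) * (∫ t, f₂ t ∂mulHaar) := by rw [hip₁, hip₂]
      _ = ∫ q : ℝ × ℝ, f₁ q.1 * f₂ q.2 ∂(mulHaar.prod mulHaar) := (integral_prod_mul f₁ f₂).symm
      _ = ∫ p, K p ∂(mulHaar.prod mulHaar) := hchange
      _ = ∫ h, ∫ u, K (u, h) ∂mulHaar ∂mulHaar := hswap
      _ = ∫ h, ip (piOp b a (Fprod ξ₁ ξ₂ h)) (Fprod η₁ η₂ h) ∂mulHaar :=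
        (integral_congr_ae haeh).symm
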